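/- Let q be an odd prime power with q ≡ 3 (mod 4), let m be a positive integer coprime to q, and let R = F_q[Y]/(Y^m − 1). Then there exists a Hermitian self-dual linear code over R of length ℓ if and only if 4 divides ℓ. -/

import Mathlib

open Polynomial

noncomputable section

/-- The ring `R = F_q[Y]/(Y^m − 1)`. -/
abbrev Rq (F : Type) [Field F] (m : ℕ) := AdjoinRoot ((X : F[X]) ^ m - 1)

lemma root_pow_eq_one (F : Type) [Field F] (m : ℕ) :
    (AdjoinRoot.root ((X : F[X]) ^ m - 1)) ^ m = 1 := by
  have h : (aeval (AdjoinRoot.root ((X : F[X]) ^ m - 1)) ((X : F[X]) ^ m - 1)) = 0 := by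
    rw [AdjoinRoot.aeval_eq, AdjoinRoot.mk_self]
  simp only [map_sub, map_pow, aeval_X, map_one, sub_eq_zero] at h
  exact h

/-- Conjugation on `R`: the `F`-algebra map determined by `Y ↦ Y^{m−1} (= Y⁻¹)`. -/
noncomputable def conjR (F : Type) [Field F] (m : ℕ) : Rq F m →ₐ[F] Rq F m :=
  AdjoinRoot.liftAlgHom _ (Algebra.ofId F _) ((AdjoinRoot.root ((X : F[X]) ^ m - 1)) ^ (m - 1)) (by
    show aeval _ _ = 0
    simp only [map_sub, map_pow, aeval_X, map_one, sub_eq_zero, ← pow_mul]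
    rw [mul_comm, pow_mul, root_pow_eq_one, one_pow])

/-- The Hermitian inner product `⟨x,y⟩ = Σ_j x_j ⬝ conj(y_j)` on `R^n`. -/
def herm (F : Type) [Field F] (m : ℕ) {n : ℕ} (x y : Fin n → Rq F m) : Rq F m :=
  ∑ j, x j * conjR F m (y j)

/-- A linear code `C ⊆ R^n` is Hermitian self-dual if `C = C^⊥`, i.e. membership in `C`
coincides with orthogonality to all of `C`. -/
def IsHermSelfDual (F : Type) [Field F] (m : ℕ) {n : ℕ}
    (C : Submodule (Rq F m) (Fin n → Rq F m)) : Prop :=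
  ∀ y, y ∈ C ↔ ∀ x ∈ C, herm F m x y = 0

/-! ### Ring-side auxiliary lemmas -/

section RingSide
variable (F : Type) [Field F] (m : ℕ)

lemma conjR_root : conjR F m (AdjoinRoot.root _) =
    (AdjoinRoot.root ((X : F[X]) ^ m - 1)) ^ (m - 1) := by
  unfold conjR
  exact AdjoinRoot.liftAlgHom_root _ _ _ _

lemma conjR_conjR (hm : 0 < m) (z : Rq F m) : conjR F m (conjR F m z) = z := by
  set r := AdjoinRoot.root ((X : F[X]) ^ m - 1) with hrdef
  have hr : r ^ m = 1 := root_pow_eq_one F m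
  have har : r ^ (m-1) * r = 1 := by
    rw [← pow_succ, Nat.sub_add_cancel hm, hr]
  have key : (r ^ (m-1)) ^ (m-1) = r := by
    have h2 : (r ^ (m-1)) ^ (m-1) * (r ^ (m-1) * r) = (r ^ (m-1)) ^ m * r := by
      rw [← mul_assoc, ← pow_succ, Nat.sub_add_cancel hm]
    have h3 : (r ^ (m-1)) ^ m = 1 := by
      rw [← pow_mul, mul_comm, pow_mul, hr, one_pow]
    rw [har, h3, mul_one, one_mul] at h2
    exact h2
  have hcomp : (conjR F m).comp (conjR F m) = AlgHom.id F (Rq F m) := by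
    apply AdjoinRoot.algHom_ext
    simp only [AlgHom.coe_comp, Function.comp_apply, AlgHom.coe_id, id_eq]
    rw [conjR_root, map_pow, conjR_root, key]
  exact DFunLike.congr_fun hcomp z

noncomputable def phiR : Rq F m →ₐ[F] F :=
  AdjoinRoot.liftAlgHom _ (Algebra.ofId F F) (1 : F) (by simp)

lemma phiR_root : phiR F m (AdjoinRoot.root _) = 1 := by
  unfold phiR
  exact AdjoinRoot.liftAlgHom_root _ _ _ _

lemma phiR_conjR (z : Rq F m) : phiR F m (conjR F m z) = phiR F m z := by
  have hcomp : (phiR F m).comp (conjR F m) = phiR F m := by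
    apply AdjoinRoot.algHom_ext
    simp only [AlgHom.coe_comp, Function.comp_apply]
    rw [conjR_root, map_pow, phiR_root, one_pow]
  exact DFunLike.congr_fun hcomp z

noncomputable def e1R : Rq F m :=
  algebraMap F (Rq F m) (m : F)⁻¹ * ∑ j ∈ Finset.range m, (AdjoinRoot.root _) ^ j

lemma e1R_mul_root_sub_one : e1R F m * (AdjoinRoot.root ((X : F[X]) ^ m - 1) - 1) = 0 := by
  rw [e1R, mul_assoc, geom_sum_mul, root_pow_eq_one, sub_self, mul_zero]

lemma e1R_mul_of_phi_zero (s : Rq F m) (hs : phiR F m s = 0) : e1R F m * s = 0 := by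
  induction s using AdjoinRoot.induction_on with
  | ih p =>
    have hev : aeval (1 : F) p = 0 := by rwa [phiR, AdjoinRoot.liftAlgHom_mk] at hs
    have hroot : IsRoot p 1 := by
      rwa [IsRoot.def, ← Polynomial.coe_aeval_eq_eval]
    obtain ⟨g, hg⟩ := (Polynomial.dvd_iff_isRoot.mpr hroot)
    rw [hg, map_mul, ← mul_assoc]
    have : AdjoinRoot.mk ((X : F[X]) ^ m - 1) (X - C 1) =
        AdjoinRoot.root ((X : F[X]) ^ m - 1) - 1 := by
      rw [map_sub, AdjoinRoot.mk_X, AdjoinRoot.mk_C, map_one]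
    rw [this, e1R_mul_root_sub_one, zero_mul]

lemma e1R_mul (r : Rq F m) :
    e1R F m * r = algebraMap F (Rq F m) (phiR F m r) * e1R F m := by
  have h0 : phiR F m (r - algebraMap F (Rq F m) (phiR F m r)) = 0 := by
    rw [map_sub, AlgHom.commutes]
    simp
  have := e1R_mul_of_phi_zero F m _ h0
  rw [mul_sub, sub_eq_zero] at this
  rw [this, mul_comm]

lemma phiR_e1R (hm : (m : F) ≠ 0) : phiR F m (e1R F m) = 1 := by
  rw [e1R, map_mul, AlgHom.commutes, map_sum]
  simp only [map_pow, phiR_root, one_pow]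
  rw [Finset.sum_const, Finset.card_range, nsmul_eq_mul, mul_one]
  simp [inv_mul_cancel₀ hm]

end RingSide

/-! ### Field-side: Euclidean self-dual codes over `F_q`, `q ≡ 3 [4]`, force `4 ∣ ℓ` -/

def dotBil (F : Type) [Field F] (ℓ : ℕ) : (Fin ℓ → F) →ₗ[F] (Fin ℓ → F) →ₗ[F] F :=
  LinearMap.mk₂ F (fun w z => ∑ j, w j * z j)
    (fun a b z => by simp [add_mul, Finset.sum_add_distrib])
    (fun c a z => by simp [Finset.mul_sum, mul_assoc])
    (fun a b z => by simp [mul_add, Finset.sum_add_distrib])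
    (fun c a z => by
      simp [Finset.mul_sum, smul_eq_mul]
      congr 1; funext j; ring)

open Matrix in
lemma field_side (F : Type) [Field F] [Fintype F] (hq : Fintype.card F % 4 = 3)
    (ℓ : ℕ) (D : Submodule F (Fin ℓ → F))
    (hD : ∀ z, z ∈ D ↔ ∀ w ∈ D, ∑ j, w j * z j = 0) : 4 ∣ ℓ := by
  classical
  have hdot0 : ∀ w ∈ D, ∀ z ∈ D, ∑ j, w j * z j = 0 := fun w hw z hz => (hD z).mp hz w hw
  set Φ : (Fin ℓ → F) →ₗ[F] Module.Dual F D :=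
    ((dotBil F ℓ).flip).compl₂ D.subtype with hΦ
  have hΦapp : ∀ z (x : D), Φ z x = ∑ j, (x : Fin ℓ → F) j * z j := fun z x => rfl
  have hker : LinearMap.ker Φ = D := by
    ext z
    simp only [LinearMap.mem_ker]
    constructor
    · intro h
      rw [hD]
      intro w hw
      have := congrArg (fun f => f ⟨w, hw⟩) h
      simpa [hΦapp] using this
    · intro hz
      ext x
      simpa [hΦapp] using (hD z).mp hz x x.2
  obtain ⟨W, hW⟩ := Submodule.exists_isCompl D
  have hsurj : Function.Surjective Φ := by
    intro f
    set g : (Fin ℓ → F) →ₗ[F] F := f.comp (D.projectionOnto W hW) with hg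
    refine ⟨fun i => g (Pi.single i 1), ?_⟩
    ext x
    rw [hΦapp]
    have h1 : ∀ j, (x : Fin ℓ → F) j * g (Pi.single j 1) = g (Pi.single j ((x : Fin ℓ → F) j)) := by
      intro j
      have : (Pi.single j ((x : Fin ℓ → F) j) : Fin ℓ → F) =
          (x : Fin ℓ → F) j • (Pi.single j 1 : Fin ℓ → F) := by
        ext t
        by_cases h : t = j <;> simp [h, Pi.single_apply]
      rw [this, LinearMap.map_smul, smul_eq_mul]
    simp_rw [h1, ← map_sum]
    rw [Finset.univ_sum_single]
    rw [hg]
    simp [Submodule.projectionOnto_apply_left]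
  set k := Module.finrank F D with hk
  have hrn := LinearMap.finrank_range_add_finrank_ker Φ
  rw [LinearMap.range_eq_top.mpr hsurj, hker] at hrn
  have hdual : Module.finrank F (⊤ : Submodule F (Module.Dual F D)) = k := by
    rw [finrank_top, Subspace.dual_finrank_eq]
  have hV : Module.finrank F (Fin ℓ → F) = ℓ := by simp
  have hkk : k + k = ℓ := by rw [← hV, ← hrn, hdual]
  have hsq : IsSquare ((-1 : F) ^ k) := by
    have hWk : Module.finrank F W = k := by
      have h2 := Submodule.finrank_add_eq_of_isCompl hW
      rw [hV] at h2
      omega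
    let bD : Module.Basis (Fin k) F D := (Module.finBasis F D).reindex (finCongr hk.symm)
    let bW : Module.Basis (Fin k) F W := (Module.finBasis F W).reindex (finCongr hWk)
    let σ : (Fin k ⊕ Fin k) ≃ Fin ℓ := finSumFinEquiv.trans (finCongr hkk)
    let u : Module.Basis (Fin k ⊕ Fin k) F (Fin ℓ → F) :=
      (bD.prod bW).map (Submodule.prodEquivOfIsCompl D W hW)
    let e' : Module.Basis (Fin k ⊕ Fin k) F (Fin ℓ → F) := (Pi.basisFun F (Fin ℓ)).reindex σ.symm
    let A := e'.toMatrix u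
    have hA : ∀ t i, A t i = u i (σ t) := by
      intro t i
      simp [A, e', Module.Basis.toMatrix_apply, Module.Basis.repr_reindex_apply, Pi.basisFun_repr]
    have huD : ∀ i, u (Sum.inl i) ∈ D := by
      intro i
      have hval : u (Sum.inl i) = (bD i : Fin ℓ → F) := by
        simp [u, Module.Basis.map_apply, Submodule.coe_prodEquivOfIsCompl',
          Module.Basis.prod_apply_inl_fst, Module.Basis.prod_apply_inl_snd]
      rw [hval]; exact (bD i).2
    let Bm : Matrix (Fin k) (Fin k) F :=
      Matrix.of (fun i j => ∑ s, u (Sum.inl i) s * u (Sum.inr j) s)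
    let Dm : Matrix (Fin k) (Fin k) F :=
      Matrix.of (fun i j => ∑ s, u (Sum.inr i) s * u (Sum.inr j) s)
    let G := Matrix.fromBlocks (0 : Matrix (Fin k) (Fin k) F) Bm Bmᵀ Dm
    have hGram : Aᵀ * A = G := by
      ext i j
      have hij : (Aᵀ * A) i j = ∑ s, u i s * u j s := by
        rw [Matrix.mul_apply]
        simp_rw [Matrix.transpose_apply, hA]
        exact Fintype.sum_equiv σ _ _ (fun t => rfl)
      rw [hij]
      cases i with
      | inl i =>
        cases j with
        | inl j =>
          simp only [G, Matrix.fromBlocks_apply₁₁, Matrix.zero_apply]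
          exact hdot0 _ (huD i) _ (huD j)
        | inr j => simp [G, Bm]
      | inr i =>
        cases j with
        | inl j =>
          simp only [G, Matrix.fromBlocks_apply₂₁, Matrix.transpose_apply, Bm, Matrix.of_apply]
          exact Finset.sum_congr rfl (fun s _ => mul_comm _ _)
        | inr j => simp [G, Dm]
    have hAdet : IsUnit A.det := by
      refine IsUnit.of_mul_eq_one (a := A.det) (u.toMatrix e').det ?_
      rw [← Matrix.det_mul, Module.Basis.toMatrix_mul_toMatrix_flip, Matrix.det_one]
    have hdetAA : A.det ^ 2 = G.det := by
      rw [← hGram, Matrix.det_mul, Matrix.det_transpose, sq]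
    let J := Matrix.fromBlocks (0 : Matrix (Fin k) (Fin k) F) (1 : Matrix (Fin k) (Fin k) F)
      (1 : Matrix (Fin k) (Fin k) F) (0 : Matrix (Fin k) (Fin k) F)
    have hJG : G = J * Matrix.fromBlocks Bmᵀ Dm (0 : (Matrix (Fin k) (Fin k) F)) Bm := by
      rw [Matrix.fromBlocks_multiply]
      simp [G, J]
    have hdetJ : J.det = (-1 : F)^k := by
      have hT : (Matrix.fromBlocks (1 : (Matrix (Fin k) (Fin k) F)) (1 : (Matrix (Fin k) (Fin k) F)) (0 : (Matrix (Fin k) (Fin k) F)) (1 : (Matrix (Fin k) (Fin k) F))).det = 1 := by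
        rw [Matrix.det_fromBlocks_zero₂₁]; simp
      have hS : (Matrix.fromBlocks (1 : (Matrix (Fin k) (Fin k) F)) (0 : (Matrix (Fin k) (Fin k) F)) (-1 : (Matrix (Fin k) (Fin k) F)) (1 : (Matrix (Fin k) (Fin k) F))).det = 1 := by
        rw [Matrix.det_fromBlocks_zero₁₂]; simp
      have hE : (Matrix.fromBlocks (-1 : (Matrix (Fin k) (Fin k) F)) (0 : (Matrix (Fin k) (Fin k) F)) (0 : (Matrix (Fin k) (Fin k) F)) (1 : (Matrix (Fin k) (Fin k) F))).det = (-1 : F)^k := by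
        rw [Matrix.det_fromBlocks_zero₁₂, Matrix.det_one, mul_one]
        rw [show (-1 : Matrix (Fin k) (Fin k) F) = -(1 : Matrix (Fin k) (Fin k) F) from rfl]
        rw [Matrix.det_neg, Matrix.det_one, mul_one]
        simp
      have hfac : J = Matrix.fromBlocks (1 : (Matrix (Fin k) (Fin k) F)) (1 : (Matrix (Fin k) (Fin k) F)) (0 : (Matrix (Fin k) (Fin k) F)) (1 : (Matrix (Fin k) (Fin k) F)) *
          Matrix.fromBlocks (1 : (Matrix (Fin k) (Fin k) F)) (0 : (Matrix (Fin k) (Fin k) F)) (-1 : (Matrix (Fin k) (Fin k) F)) (1 : (Matrix (Fin k) (Fin k) F)) *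
          Matrix.fromBlocks (1 : (Matrix (Fin k) (Fin k) F)) (1 : (Matrix (Fin k) (Fin k) F)) (0 : (Matrix (Fin k) (Fin k) F)) (1 : (Matrix (Fin k) (Fin k) F)) *
          Matrix.fromBlocks (-1 : (Matrix (Fin k) (Fin k) F)) (0 : (Matrix (Fin k) (Fin k) F)) (0 : (Matrix (Fin k) (Fin k) F)) (1 : (Matrix (Fin k) (Fin k) F)) := by
        simp only [J]
        rw [Matrix.fromBlocks_multiply, Matrix.fromBlocks_multiply, Matrix.fromBlocks_multiply]
        congr 1 <;> simp
      rw [hfac, Matrix.det_mul, Matrix.det_mul, Matrix.det_mul, hT, hS, hE]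
      ring
    have hdetG : G.det = (-1 : F)^k * Bm.det^2 := by
      rw [hJG, Matrix.det_mul, hdetJ, Matrix.det_fromBlocks_zero₂₁, Matrix.det_transpose]
      ring
    have hcomb : A.det ^ 2 = (-1 : F)^k * Bm.det^2 := by rw [hdetAA, hdetG]
    have hAne : A.det ≠ 0 := hAdet.ne_zero
    have hBmne : Bm.det ≠ 0 := by
      intro h0
      rw [h0] at hcomb
      simp at hcomb
      exact hAne hcomb
    refine ⟨A.det / Bm.det, ?_⟩
    rw [div_mul_div_comm, eq_div_iff (by exact mul_ne_zero hBmne hBmne)]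
    linear_combination -hcomb
  have hk_even : Even k := by
    by_contra hodd
    rw [Nat.not_even_iff_odd] at hodd
    rw [hodd.neg_one_pow] at hsq
    rw [FiniteField.isSquare_neg_one_iff] at hsq
    exact hsq hq
  obtain ⟨t, ht⟩ := hk_even
  exact ⟨t, by omega⟩

/-! ### Generalized Hermitian self-duality over arbitrary finite index types -/

section Codes
variable (F : Type) [Field F] (m : ℕ)

def hermG {ι : Type} [Fintype ι] (x y : ι → Rq F m) : Rq F m :=
  ∑ j, x j * conjR F m (y j)

def SDG {ι : Type} [Fintype ι] (C : Submodule (Rq F m) (ι → Rq F m)) : Prop :=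
  ∀ y, y ∈ C ↔ ∀ x ∈ C, hermG F m x y = 0

lemma sdg_transport {ι κ : Type} [Fintype ι] [Fintype κ] (τ : ι ≃ κ)
    (C' : Submodule (Rq F m) (ι → Rq F m)) (h : SDG F m C') :
    ∃ C : Submodule (Rq F m) (κ → Rq F m), SDG F m C := by
  set ρ : (κ → Rq F m) →ₗ[Rq F m] (ι → Rq F m) := LinearMap.funLeft (Rq F m) (Rq F m) τ with hρ
  have hρapp : ∀ (y : κ → Rq F m) i, ρ y i = y (τ i) := fun y i => rfl
  have hherm : ∀ (x y : κ → Rq F m), hermG F m x y = hermG F m (ρ x) (ρ y) := by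
    intro x y
    exact (Equiv.sum_comp τ (fun j => x j * conjR F m (y j))).symm
  refine ⟨Submodule.comap ρ C', ?_⟩
  intro y
  simp only [Submodule.mem_comap]
  constructor
  · intro hy x hx
    rw [hherm]
    exact (h (ρ y)).mp hy (ρ x) hx
  · intro hy
    rw [h (ρ y)]
    intro x' hx'
    set x : κ → Rq F m := fun j => x' (τ.symm j) with hx
    have hρx : ρ x = x' := by
      funext i
      rw [hρapp, hx]
      simp
    have hxC : x ∈ Submodule.comap ρ C' := by rw [Submodule.mem_comap, hρx]; exact hx'
    have := hy x hxC
    rwa [hherm, hρx] at this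

lemma sdg_blocks {ι κ : Type} [Fintype ι] [DecidableEq ι] [Fintype κ]
    (C0 : Submodule (Rq F m) (κ → Rq F m)) (h : SDG F m C0) :
    ∃ C : Submodule (Rq F m) (ι × κ → Rq F m), SDG F m C := by
  classical
  refine ⟨{ carrier := {y | ∀ i, (fun j => y (i, j)) ∈ C0}
            add_mem' := by
              intro a b ha hb i
              exact C0.add_mem (ha i) (hb i)
            zero_mem' := by intro i; exact C0.zero_mem
            smul_mem' := by
              intro c y hy i
              exact C0.smul_mem c (hy i) }, ?_⟩
  set C : Submodule (Rq F m) (ι × κ → Rq F m) :=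
    { carrier := {y | ∀ i, (fun j => y (i, j)) ∈ C0}
      add_mem' := by
        intro a b ha hb i
        exact C0.add_mem (ha i) (hb i)
      zero_mem' := by intro i; exact C0.zero_mem
      smul_mem' := by
        intro c y hy i
        exact C0.smul_mem c (hy i) } with hC
  have hmem : ∀ y, y ∈ C ↔ ∀ i, (fun j => y (i, j)) ∈ C0 := fun y => Iff.rfl
  have hsplit : ∀ x y : ι × κ → Rq F m,
      hermG F m x y = ∑ i, hermG F m (fun j => x (i, j)) (fun j => y (i, j)) := by
    intro x y
    rw [hermG, Fintype.sum_prod_type]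
    rfl
  intro y
  rw [hmem]
  constructor
  · intro hy x hx
    rw [hsplit]
    refine Finset.sum_eq_zero (fun i _ => ?_)
    exact ((h _).mp (hy i)) _ (hx i)
  · intro hy i
    rw [h]
    intro x₄ hx₄
    set x : ι × κ → Rq F m := fun p => if p.1 = i then x₄ p.2 else 0 with hxdef
    have hxC : x ∈ C := by
      rw [hmem]
      intro i'
      by_cases hii : i' = i
      · subst hii
        simpa [hxdef] using hx₄
      · have : (fun j => x (i', j)) = (0 : κ → Rq F m) := by
          funext j; simp [hxdef, hii]
        rw [this]; exact C0.zero_mem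
    have h0 := hy x hxC
    rw [hsplit] at h0
    rw [Finset.sum_eq_single i] at h0
    · simpa [hxdef] using h0
    · intro i' _ hii
      have : (fun j => x (i', j)) = (0 : κ → Rq F m) := by
        funext j; simp [hxdef, hii]
      rw [this, hermG]
      simp
    · intro habs
      exact absurd (Finset.mem_univ i) habs

lemma sdg_four (hm : 0 < m) (a b : F) (hab : a ^ 2 + b ^ 2 = -1) :
    ∃ C : Submodule (Rq F m) (Fin 4 → Rq F m), SDG F m C := by
  set R := Rq F m
  letI : CommRing R := inferInstanceAs (CommRing (Rq F m))
  set ι : F →+* R := algebraMap F R with hι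
  set α : R := ι a with hα
  set β : R := ι b with hβ
  have habR : α ^ 2 + β ^ 2 = -1 := by
    rw [hα, hβ, ← map_pow, ← map_pow, ← map_add, hab, map_neg, map_one]
  set c : R →ₐ[F] R := conjR F m with hc
  have hcα : c α = α := by rw [hα]; exact AlgHom.commutes _ _
  have hcβ : c β = β := by rw [hβ]; exact AlgHom.commutes _ _
  refine ⟨{ carrier := {y | y 0 = -α * y 2 - β * y 3 ∧ y 1 = β * y 2 - α * y 3}
            add_mem' := by
              rintro u v ⟨hu1, hu2⟩ ⟨hv1, hv2⟩
              refine ⟨?_, ?_⟩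
              · simp only [Pi.add_apply]; rw [hu1, hv1]; ring
              · simp only [Pi.add_apply]; rw [hu2, hv2]; ring
            zero_mem' := by constructor <;> simp
            smul_mem' := by
              rintro r y ⟨h1, h2⟩
              refine ⟨?_, ?_⟩
              · simp only [Pi.smul_apply, smul_eq_mul]; rw [h1]; ring
              · simp only [Pi.smul_apply, smul_eq_mul]; rw [h2]; ring }, ?_⟩
  intro y
  simp only [Submodule.mem_mk, AddSubmonoid.mem_mk, AddSubsemigroup.mem_mk, Set.mem_setOf_eq]
  constructor
  · rintro ⟨hy1, hy2⟩ x hx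
    obtain ⟨hx1, hx2⟩ := hx
    have : hermG F m x y = x 0 * c (y 0) + x 1 * c (y 1) + x 2 * c (y 2) + x 3 * c (y 3) := by
      rw [hermG, Fin.sum_univ_four]
    rw [this, hx1, hx2, hy1, hy2]
    rw [map_sub, map_sub, map_mul, map_mul, map_mul, map_mul, map_neg, hcα, hcβ]
    linear_combination (x 2 * c (y 2) + x 3 * c (y 3)) * habR
  · intro hy
    have hr1 : (![1, 0, α, β] : Fin 4 → R) ∈
        {y : Fin 4 → R | y 0 = -α * y 2 - β * y 3 ∧ y 1 = β * y 2 - α * y 3} := by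
      constructor
      · simp only [Matrix.cons_val_zero, Matrix.cons_val_two, Matrix.cons_val_three,
          Matrix.head_cons, Matrix.tail_cons]
        linear_combination habR
      · simp only [Matrix.cons_val_one, Matrix.cons_val_two, Matrix.cons_val_three,
          Matrix.head_cons, Matrix.tail_cons, Matrix.cons_val_zero]
        ring
    have hr2 : (![0, 1, -β, α] : Fin 4 → R) ∈
        {y : Fin 4 → R | y 0 = -α * y 2 - β * y 3 ∧ y 1 = β * y 2 - α * y 3} := by
      constructor
      · simp only [Matrix.cons_val_zero, Matrix.cons_val_two, Matrix.cons_val_three,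
          Matrix.head_cons, Matrix.tail_cons]
        ring
      · simp only [Matrix.cons_val_one, Matrix.cons_val_two, Matrix.cons_val_three,
          Matrix.head_cons, Matrix.tail_cons, Matrix.cons_val_zero]
        linear_combination habR
    have h1 := hy _ hr1
    have h2 := hy _ hr2
    rw [hermG, Fin.sum_univ_four] at h1 h2
    simp only [Matrix.cons_val_zero, Matrix.cons_val_one, Matrix.cons_val_two,
      Matrix.cons_val_three, Matrix.head_cons, Matrix.tail_cons, one_mul, zero_mul,
      add_zero, zero_add] at h1 h2
    have hcc := conjR_conjR F m hm
    have h1' := congrArg c h1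
    have h2' := congrArg c h2
    rw [map_add, map_add, map_mul, map_mul, hcα, hcβ, hcc, hcc, hcc, map_zero] at h1'
    rw [map_add, map_add, map_mul, map_mul, map_neg, hcα, hcβ, hcc, hcc, hcc, map_zero] at h2'
    constructor
    · linear_combination h1'
    · linear_combination h2'

end Codes

/-- There exists a Hermitian self-dual linear code over `R = F_q[Y]/(Y^m − 1)` of
length `ℓ` iff `4 ∣ ℓ` (case `q ≡ 3 (mod 4)`). -/
theorem statement1 (F : Type) [Field F] [Fintype F]
    (hq : Fintype.card F % 4 = 3)
    (m : ℕ) (hm : 0 < m) (hcop : Nat.Coprime m (Fintype.card F)) (ℓ : ℕ) :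
    (∃ C : Submodule (Rq F m) (Fin ℓ → Rq F m), IsHermSelfDual F m C) ↔ 4 ∣ ℓ := by
  constructor
  · rintro ⟨C, hC⟩
    -- (m : F) ≠ 0
    have hm' : (m : F) ≠ 0 := by
      intro h0
      have hbez := Nat.gcd_eq_gcd_ab m (Fintype.card F)
      have hgcd : Nat.gcd m (Fintype.card F) = 1 := hcop
      have hcast := congrArg (fun z : ℤ => (z : F)) hbez
      simp only [hgcd, Nat.cast_one, Int.cast_one, Int.cast_add, Int.cast_mul,
        Int.cast_natCast] at hcast
      rw [h0, FiniteField.cast_card_eq_zero] at hcast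
      simp at hcast
    set ψ : (Fin ℓ → Rq F m) →ₗ[F] (Fin ℓ → F) :=
      LinearMap.compLeft (phiR F m).toLinearMap (Fin ℓ) with hψ
    have hψapp : ∀ (y : Fin ℓ → Rq F m) j, ψ y j = phiR F m (y j) := fun y j => rfl
    set D : Submodule F (Fin ℓ → F) := Submodule.map ψ (C.restrictScalars F) with hDdef
    apply field_side F hq ℓ D
    intro z
    constructor
    · rintro ⟨y, hy, rfl⟩ w hw
      obtain ⟨x, hx, rfl⟩ := hw
      have h0 : herm F m x y = 0 :=
        (hC y).mp (by simpa using hy) x (by simpa using hx)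
      have hsum : ∑ j, ψ x j * ψ y j = phiR F m (herm F m x y) := by
        rw [herm, map_sum]
        refine Finset.sum_congr rfl (fun j _ => ?_)
        rw [map_mul, phiR_conjR]
        rfl
      rw [hsum, h0, map_zero]
    · intro hz
      set v : Fin ℓ → Rq F m := fun j => conjR F m (e1R F m) * algebraMap F (Rq F m) (z j)
        with hv
      have hvC : v ∈ C := by
        rw [hC v]
        intro x hx
        have hterm : ∀ j, x j * conjR F m (v j) =
            e1R F m * algebraMap F (Rq F m) (phiR F m (x j) * z j) := by
          intro j
          rw [hv]
          simp only
          rw [map_mul, conjR_conjR F m hm, AlgHom.commutes,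
            map_mul (algebraMap F (Rq F m))]
          rw [show x j * (e1R F m * algebraMap F (Rq F m) (z j)) =
            (e1R F m * x j) * algebraMap F (Rq F m) (z j) from by ring]
          rw [e1R_mul F m (x j)]
          ring
        have hval : herm F m x v =
            e1R F m * algebraMap F (Rq F m) (∑ j, phiR F m (x j) * z j) := by
          rw [herm]
          simp_rw [hterm]
          rw [← Finset.mul_sum, ← map_sum]
        rw [hval]
        have hψx : ψ x ∈ D := Submodule.mem_map_of_mem (by simpa using hx)
        have hz0 := hz (ψ x) hψx
        have : (∑ j, phiR F m (x j) * z j) = ∑ j, ψ x j * z j := rfl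
        rw [this, hz0, map_zero, mul_zero]
      refine ⟨v, by simpa using hvC, ?_⟩
      funext j
      rw [hψapp, hv]
      simp only
      rw [map_mul, phiR_conjR, phiR_e1R F m hm', AlgHom.commutes, one_mul]
      simp
  · rintro ⟨t, rfl⟩
    obtain ⟨p, hp⟩ := CharP.exists F
    haveI : CharP F p := hp
    have hpprime : p.Prime := CharP.char_is_prime F p
    haveI : NeZero p := ⟨hpprime.ne_zero⟩
    obtain ⟨a, b, hab⟩ := CharP.sq_add_sq F p (-1 : ℤ)
    have hab' : ((a : F)) ^ 2 + ((b : F)) ^ 2 = -1 := by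
      rw [hab]
      simp
    obtain ⟨C₄, hC₄⟩ := sdg_four F m hm (a : F) (b : F) hab'
    obtain ⟨C', hC'⟩ := sdg_blocks F m (ι := Fin t) C₄ hC₄
    have hτ : (Fin t × Fin 4) ≃ Fin (4 * t) :=
      finProdFinEquiv.trans (finCongr (by omega))
    obtain ⟨C, hCsdg⟩ := sdg_transport F m hτ C' hC'
    exact ⟨C, hCsdg⟩
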